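/- Let d ≥ 3 be an odd integer and let (φ_d) be the Chebyshev polynomials of the first kind. Let K be a field, x ∈ K nonzero, and set u = x + x⁻¹, v = y·(1+x)·x^{−(d+1)/2} for any y ∈ K with y² = x^{2d} + 1. Then v² = (u + 2)·φ_d(u). Equivalently, (x^{2d}+1)·(x+1)²·x^{−(d+1)} = (u+2)·φ_d(u). -/

import Mathlib

open Polynomial

/-- The Chebyshev polynomials of the first kind `φ_d ∈ ℤ[X]`, normalized so that
`φ_0 = 2`, `φ_1 = X`, `φ_{d+2} = X·φ_{d+1} - φ_d`. -/
noncomputable def chebPhi : ℕ → Polynomial ℤ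
  | 0 => 2
  | 1 => X
  | (n + 2) => X * chebPhi (n + 1) - chebPhi n

lemma chebPhi_key (K : Type*) [Field K] (x : K) (hx : x ≠ 0) :
    ∀ n : ℕ, Polynomial.aeval (x + x⁻¹) (chebPhi n) = x ^ n + (x⁻¹) ^ n := by
  intro n
  induction n using Nat.strong_induction_on with
  | _ n ih =>
    match n with
    | 0 => simp [chebPhi, map_ofNat]; norm_num
    | 1 => simp [chebPhi]
    | (m + 2) =>
      rw [chebPhi]
      simp only [map_sub, map_mul, aeval_X, ih (m+1) (by omega), ih m (by omega)]
      simp only [inv_pow]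
      field_simp
      ring

/-- For odd `d ≥ 3`: with `u = x + x⁻¹` and `v = y(1+x)x^{-(d+1)/2}` where
`y² = x^{2d}+1`, one has `v² = (u+2)φ_d(u)`; equivalently
`(x^{2d}+1)(x+1)²x^{-(d+1)} = (u+2)φ_d(u)`. -/
theorem stmt13 (d : ℕ) (hd : 3 ≤ d) (hdodd : Odd d) (K : Type*) [Field K]
    (x : K) (hx : x ≠ 0) (u : K) (hu : u = x + x⁻¹) :
    (∀ y v : K, y ^ 2 = x ^ (2 * d) + 1 → v = y * (1 + x) * (x ^ ((d + 1) / 2))⁻¹ →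
      v ^ 2 = (u + 2) * Polynomial.aeval u (chebPhi d)) ∧
    (x ^ (2 * d) + 1) * (x + 1) ^ 2 * (x ^ (d + 1))⁻¹ =
      (u + 2) * Polynomial.aeval u (chebPhi d) := by
  have hkey : Polynomial.aeval u (chebPhi d) = x ^ d + (x⁻¹) ^ d := by
    rw [hu]; exact chebPhi_key K x hx d
  have h2 : (x ^ (2 * d) + 1) * (x + 1) ^ 2 * (x ^ (d + 1))⁻¹ =
      (u + 2) * Polynomial.aeval u (chebPhi d) := by
    rw [hkey, hu]
    simp only [inv_pow]
    field_simp
    ring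
  refine ⟨?_, h2⟩
  intro y v hy hv
  have hdiv : (d + 1) / 2 * 2 = d + 1 := by
    obtain ⟨k, hk⟩ := hdodd; omega
  rw [hv, ← h2]
  rw [mul_pow, mul_pow, hy, ← inv_pow, ← pow_mul, hdiv]
  ring
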